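/- Let μ : [0,1] → ℝ be 1-Lipschitz and let ε > 0. Define c*(μ) as the supremum over all sampling densities w ∈ W of the infimum, over all 1-Lipschitz functions λ : [0,1] → ℝ satisfying (sup_{x∈[0,1]} μ(x)) − (sup_{x∈[0,1]} λ(x)) > ε, of ∫₀¹ w(x)(μ(x) − λ(x))² dx. Then c*(μ) = ε². -/

import Mathlib

open MeasureTheory

/-- for a 1-Lipschitz `μ : [0,1] → ℝ` and `ε > 0`, the value
`c*(μ) = sup_{w ∈ W} inf_{λ : max μ − max λ > ε} ∫₀¹ w(x)(μ(x) − λ(x))² dx`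
equals `ε²`, where `W` is the set of sampling densities on `[0,1]` and the infimum runs
over 1-Lipschitz functions `λ`. -/
theorem stmt_0 (μ : ℝ → ℝ)
    (hμ : ∀ x ∈ Set.Icc (0:ℝ) 1, ∀ y ∈ Set.Icc (0:ℝ) 1, |μ x - μ y| ≤ |x - y|)
    (ε : ℝ) (hε : 0 < ε) :
    sSup {c : ℝ | ∃ w : ℝ → ℝ, Measurable w ∧ (∀ x ∈ Set.Icc (0:ℝ) 1, 0 ≤ w x) ∧
        (∫ x in Set.Icc (0:ℝ) 1, w x) = 1 ∧
        c = sInf {d : ℝ | ∃ lam : ℝ → ℝ,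
          (∀ x ∈ Set.Icc (0:ℝ) 1, ∀ y ∈ Set.Icc (0:ℝ) 1, |lam x - lam y| ≤ |x - y|) ∧
          sSup (μ '' Set.Icc (0:ℝ) 1) - sSup (lam '' Set.Icc (0:ℝ) 1) > ε ∧
          d = ∫ x in Set.Icc (0:ℝ) 1, w x * (μ x - lam x) ^ 2}} = ε ^ 2 := by
  have hμc : ContinuousOn μ (Set.Icc (0:ℝ) 1) := by
    have : LipschitzOnWith 1 μ (Set.Icc (0:ℝ) 1) := by
      apply LipschitzOnWith.of_dist_le_mul
      intro x hx y hy
      simpa [Real.dist_eq] using hμ x hx y hy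
    exact this.continuousOn
  obtain ⟨x₀, hx₀, hmax⟩ :=
    isCompact_Icc.exists_isMaxOn (Set.nonempty_Icc.2 zero_le_one) hμc
  have hmax' : ∀ x ∈ Set.Icc (0:ℝ) 1, μ x ≤ μ x₀ := isMaxOn_iff.mp hmax
  have hsupμ : sSup (μ '' Set.Icc (0:ℝ) 1) = μ x₀ := by
    apply IsGreatest.csSup_eq
    exact ⟨Set.mem_image_of_mem _ hx₀, by rintro y ⟨x, hx, rfl⟩; exact hmax' x hx⟩
  -- the inner set of values, for a given density w
  set D : (ℝ → ℝ) → Set ℝ := fun w => {d : ℝ | ∃ lam : ℝ → ℝ,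
      (∀ x ∈ Set.Icc (0:ℝ) 1, ∀ y ∈ Set.Icc (0:ℝ) 1, |lam x - lam y| ≤ |x - y|) ∧
      sSup (μ '' Set.Icc (0:ℝ) 1) - sSup (lam '' Set.Icc (0:ℝ) 1) > ε ∧
      d = ∫ x in Set.Icc (0:ℝ) 1, w x * (μ x - lam x) ^ 2} with hD
  -- for every valid w and δ > 0, (ε+δ)² ∈ D w
  have hmemD : ∀ w : ℝ → ℝ, (∫ x in Set.Icc (0:ℝ) 1, w x) = 1 →
      ∀ δ : ℝ, 0 < δ → (ε + δ) ^ 2 ∈ D w := by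
    intro w hw1 δ hδ
    refine ⟨fun x => μ x - (ε + δ), ?_, ?_, ?_⟩
    · intro x hx y hy
      simpa using hμ x hx y hy
    · have hsuplam : sSup ((fun x => μ x - (ε + δ)) '' Set.Icc (0:ℝ) 1) = μ x₀ - (ε + δ) := by
        apply IsGreatest.csSup_eq
        constructor
        · exact ⟨x₀, hx₀, rfl⟩
        · rintro y ⟨x, hx, rfl⟩
          have := hmax' x hx; dsimp only; linarith
      rw [hsupμ, hsuplam]; linarith
    · have : ∀ x : ℝ, w x * (μ x - (μ x - (ε + δ))) ^ 2 = w x * (ε + δ) ^ 2 := by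
        intro x; ring
      simp only [this]
      rw [MeasureTheory.integral_mul_const, hw1, one_mul]
  have hD0 : ∀ w : ℝ → ℝ, (∀ x ∈ Set.Icc (0:ℝ) 1, 0 ≤ w x) → ∀ d ∈ D w, 0 ≤ d := by
    rintro w hw0 d ⟨lam, _, _, rfl⟩
    apply setIntegral_nonneg measurableSet_Icc
    intro x hx
    exact mul_nonneg (hw0 x hx) (sq_nonneg _)
  -- Step A : every element of the outer set is ≤ ε²
  have hub : ∀ c ∈ {c : ℝ | ∃ w : ℝ → ℝ, Measurable w ∧ (∀ x ∈ Set.Icc (0:ℝ) 1, 0 ≤ w x) ∧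
      (∫ x in Set.Icc (0:ℝ) 1, w x) = 1 ∧ c = sInf (D w)}, c ≤ ε ^ 2 := by
    rintro c ⟨w, hwm, hw0, hw1, rfl⟩
    have hbdd : BddBelow (D w) := ⟨0, fun d hd => hD0 w hw0 d hd⟩
    have key : ∀ δ : ℝ, 0 < δ → sInf (D w) ≤ (ε + δ) ^ 2 := fun δ hδ =>
      csInf_le hbdd (hmemD w hw1 δ hδ)
    by_contra h
    push_neg at h
    set c := sInf (D w)
    have h2ε : (0:ℝ) < 2 * ε + 1 := by linarith
    set δ := min (1/2) ((c - ε ^ 2) / (2 * ε + 1)) with hδdef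
    have hδ0 : 0 < δ := lt_min (by norm_num) (div_pos (by linarith) h2ε)
    have hδ1 : δ ≤ 1/2 := min_le_left _ _
    have hδ2 : δ ≤ (c - ε ^ 2) / (2 * ε + 1) := min_le_right _ _
    have hδ2' : δ * (2 * ε + 1) ≤ c - ε ^ 2 := by
      rw [← le_div_iff₀ h2ε]; exact hδ2
    have := key δ hδ0
    nlinarith [sq_nonneg δ]
  -- Step B : for small δ, (ε-δ)² is at most some element of the outer set
  have hlb : ∀ δ : ℝ, 0 < δ → δ ≤ 1/2 → δ ≤ ε →
      ∃ c ∈ {c : ℝ | ∃ w : ℝ → ℝ, Measurable w ∧ (∀ x ∈ Set.Icc (0:ℝ) 1, 0 ≤ w x) ∧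
        (∫ x in Set.Icc (0:ℝ) 1, w x) = 1 ∧ c = sInf (D w)}, (ε - δ) ^ 2 ≤ c := by
    intro δ hδ0 hδhalf hδε
    set a := min x₀ (1 - δ) with ha
    have ha0 : 0 ≤ a := le_min hx₀.1 (by linarith)
    have ha1 : a + δ ≤ 1 := by
      have : a ≤ 1 - δ := min_le_right _ _
      linarith
    set I := Set.Icc a (a + δ) with hI
    have hx₀I : x₀ ∈ I := by
      constructor
      · exact min_le_left _ _
      · rcases le_total x₀ (1 - δ) with h | h
        · rw [hI, ha, min_eq_left h] at *; linarith
        · have : a = 1 - δ := min_eq_right h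
          rw [this]; linarith [hx₀.2]
    have hIsub : I ⊆ Set.Icc (0:ℝ) 1 := fun x hx => ⟨le_trans ha0 hx.1, le_trans hx.2 ha1⟩
    set w : ℝ → ℝ := I.indicator (fun _ => δ⁻¹) with hw
    have hwm : Measurable w := measurable_const.indicator measurableSet_Icc
    have hw0 : ∀ x ∈ Set.Icc (0:ℝ) 1, 0 ≤ w x := by
      intro x _
      exact Set.indicator_nonneg (fun _ _ => by positivity) x
    have hvolI : (volume I).toReal = δ := by
      rw [hI, Real.volume_Icc]
      simp [ENNReal.toReal_ofReal hδ0.le]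
    have hw1 : (∫ x in Set.Icc (0:ℝ) 1, w x) = 1 := by
      rw [hw, setIntegral_indicator measurableSet_Icc,
        Set.inter_eq_self_of_subset_right hIsub, setIntegral_const, Measure.real, hvolI, smul_eq_mul]
      field_simp
    refine ⟨sInf (D w), ⟨w, hwm, hw0, hw1, rfl⟩, ?_⟩
    apply le_csInf ⟨(ε + 1) ^ 2, hmemD w hw1 1 one_pos⟩
    rintro d ⟨lam, hlamLip, hlamgt, rfl⟩
    have hlamc : ContinuousOn lam (Set.Icc (0:ℝ) 1) := by
      have : LipschitzOnWith 1 lam (Set.Icc (0:ℝ) 1) := by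
        apply LipschitzOnWith.of_dist_le_mul
        intro x hx y hy
        simpa [Real.dist_eq] using hlamLip x hx y hy
      exact this.continuousOn
    have hbddlam : BddAbove (lam '' Set.Icc (0:ℝ) 1) :=
      (isCompact_Icc.image_of_continuousOn hlamc).bddAbove
    have hlamlt : sSup (lam '' Set.Icc (0:ℝ) 1) < μ x₀ - ε := by
      rw [hsupμ] at hlamgt; linarith
    -- pointwise lower bound on I
    have hpt : ∀ x ∈ I, ε - δ ≤ μ x - lam x := by
      intro x hx
      have hxmem : x ∈ Set.Icc (0:ℝ) 1 := hIsub hx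
      have h1 : lam x ≤ sSup (lam '' Set.Icc (0:ℝ) 1) :=
        le_csSup hbddlam (Set.mem_image_of_mem _ hxmem)
      have h2 : |μ x - μ x₀| ≤ |x - x₀| := hμ x hxmem x₀ hx₀
      have h3 : |x - x₀| ≤ δ := by
        rw [abs_le]
        constructor <;> [linarith [hx.1, hx₀I.2]; linarith [hx.2, hx₀I.1]]
      have h4 : μ x₀ - δ ≤ μ x := by
        have := abs_le.mp h2
        linarith [this.1, h3, (abs_le.mp h2).1]
      linarith
    -- rewrite the integral as an integral over I
    have hrw : (∫ x in Set.Icc (0:ℝ) 1, w x * (μ x - lam x) ^ 2)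
        = ∫ x in I, δ⁻¹ * (μ x - lam x) ^ 2 := by
      have hfun : ∀ x : ℝ, w x * (μ x - lam x) ^ 2
          = I.indicator (fun x => δ⁻¹ * (μ x - lam x) ^ 2) x := by
        intro x
        by_cases hx : x ∈ I <;> simp [hw, Set.indicator, hx]
      simp only [hfun]
      rw [setIntegral_indicator measurableSet_Icc,
        Set.inter_eq_self_of_subset_right hIsub]
    rw [hrw]
    have hgint : IntegrableOn (fun x => δ⁻¹ * (μ x - lam x) ^ 2) I volume := by
      apply ContinuousOn.integrableOn_Icc
      apply ContinuousOn.mul continuousOn_const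
      exact ((hμc.mono hIsub).sub (hlamc.mono hIsub)).pow 2
    have hptsq : ∀ x ∈ I, δ⁻¹ * (ε - δ) ^ 2 ≤ δ⁻¹ * (μ x - lam x) ^ 2 := by
      intro x hx
      apply mul_le_mul_of_nonneg_left _ (by positivity)
      exact pow_le_pow_left₀ (by linarith) (hpt x hx) 2
    have := setIntegral_ge_of_const_le_real measurableSet_Icc
      (by simp [hI, Real.volume_Icc]) hptsq hgint
    rw [Measure.real, hvolI] at this
    calc (ε - δ) ^ 2 = δ⁻¹ * (ε - δ) ^ 2 * δ := by field_simp
      _ ≤ _ := this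
  -- conclude
  apply le_antisymm
  · exact Real.sSup_le hub (by positivity)
  · have hbddS : BddAbove {c : ℝ | ∃ w : ℝ → ℝ, Measurable w ∧
        (∀ x ∈ Set.Icc (0:ℝ) 1, 0 ≤ w x) ∧ (∫ x in Set.Icc (0:ℝ) 1, w x) = 1 ∧
        c = sInf (D w)} := ⟨ε ^ 2, hub⟩
    by_contra h
    push_neg at h
    set t := sSup {c : ℝ | ∃ w : ℝ → ℝ, Measurable w ∧
        (∀ x ∈ Set.Icc (0:ℝ) 1, 0 ≤ w x) ∧ (∫ x in Set.Icc (0:ℝ) 1, w x) = 1 ∧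
        c = sInf (D w)} with ht
    set δ := min (1/2) (min ε ((ε ^ 2 - t) / (2 * ε))) with hδdef
    have hδ0 : 0 < δ :=
      lt_min (by norm_num) (lt_min hε (div_pos (by linarith) (by linarith)))
    have hδhalf : δ ≤ 1/2 := min_le_left _ _
    have hδε : δ ≤ ε := le_trans (min_le_right _ _) (min_le_left _ _)
    have hδ3 : δ ≤ (ε ^ 2 - t) / (2 * ε) := le_trans (min_le_right _ _) (min_le_right _ _)
    have hδ3' : δ * (2 * ε) ≤ ε ^ 2 - t := by
      rw [← le_div_iff₀ (by linarith)]; exact hδ3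
    obtain ⟨c, hcmem, hc⟩ := hlb δ hδ0 hδhalf hδε
    have hct : c ≤ t := le_csSup hbddS hcmem
    nlinarith [sq_nonneg δ, hδ0]
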